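/- Let p be a nonnegative integrable function on ℝ^d with Z_p = ∫ p, let φ : ℝ^d → ℝ^n, and let Q be the family of functions q_θ(x) = exp(⟨θ, φ(x)⟩), θ ∈ ℝ^n, assumed closed under multiplication by positive constants (e.g., the constant function 1 lies in the span of φ₁,…,φₙ). Assume all the integrals below are finite. Then θ* minimizes θ ↦ D*(p‖q_θ) over ℝ^n if and only if θ* minimizes θ ↦ D(p‖q_θ) = ∫ p log(p/q_θ) subject to the constraint ∫ q_θ = Z_p and moreover satisfies ∫ q_{θ*} = Z_p. -/

import Mathlib

open MeasureTheory
open scoped BigOperators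

/-- Minimizing the generalized KL divergence `D*(p‖q_θ)` without constraint is equivalent
to minimizing the KL divergence `D(p‖q_θ) = ∫ p log(p/q_θ)` subject to the constraint
`∫ q_θ = Z_p`, for an exponential family closed under multiplication by positive
constants, all integrals being assumed finite. -/
theorem genKL_min_iff_constrained_KL_min {d n : ℕ}
    (p : (Fin d → ℝ) → ℝ) (hp_nonneg : ∀ x, 0 ≤ p x) (hp_int : Integrable p)
    (Z : ℝ) (hZ : Z = ∫ x, p x)
    (φ : (Fin d → ℝ) → Fin n → ℝ)
    (q : (Fin n → ℝ) → (Fin d → ℝ) → ℝ)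
    (hq : ∀ θ x', q θ x' = Real.exp (∑ i, θ i * φ x' i))
    -- the family is closed under multiplication by positive constants
    (hscale : ∀ θ : Fin n → ℝ, ∀ c : ℝ, 0 < c → ∃ θ' : Fin n → ℝ,
      ∀ x', q θ' x' = c * q θ x')
    -- all the integrals below are finite
    (hq_int : ∀ θ, Integrable (q θ))
    (hlog_int : ∀ θ, Integrable (fun x => p x * Real.log (p x / q θ x)))
    (D Dstar : (Fin n → ℝ) → ℝ)
    (hD : ∀ θ, D θ = ∫ x, p x * Real.log (p x / q θ x))
    (hDstar : ∀ θ, Dstar θ = D θ - (∫ x, p x) + ∫ x, q θ x)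
    (θstar : Fin n → ℝ) :
    (∀ θ : Fin n → ℝ, Dstar θstar ≤ Dstar θ) ↔
      ((∫ x, q θstar x) = Z ∧
        ∀ θ : Fin n → ℝ, (∫ x, q θ x) = Z → D θstar ≤ D θ) := by
  -- positivity of q
  have hq_pos : ∀ θ x', 0 < q θ x' := fun θ x' => by rw [hq]; exact Real.exp_pos _
  -- positivity of ∫ q
  have hI_pos : ∀ θ, 0 < ∫ x, q θ x := by
    intro θ
    rw [integral_pos_iff_support_of_nonneg (fun x => (hq_pos θ x).le) (hq_int θ)]
    have : Function.support (q θ) = Set.univ := by ext x; simp [(hq_pos θ x).ne']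
    rw [this]
    exact Measure.measure_univ_pos.mpr (NeZero.ne _)
  have hZ_nonneg : 0 ≤ Z := hZ ▸ integral_nonneg hp_nonneg
  -- scaling formula for D
  have hDscale : ∀ θ θ' : Fin n → ℝ, ∀ c : ℝ, 0 < c → (∀ x', q θ' x' = c * q θ x') →
      D θ' = D θ - Z * Real.log c := by
    intro θ θ' c hc hqq
    have hpt : ∀ x, p x * Real.log (p x / q θ' x)
        = p x * Real.log (p x / q θ x) - Real.log c * p x := by
      intro x
      rcases eq_or_ne (p x) 0 with h0 | h0
      · simp [h0]
      · rw [hqq x]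
        have hqne : q θ x ≠ 0 := (hq_pos θ x).ne'
        have : p x / (c * q θ x) = (p x / q θ x) / c := by
          rw [mul_comm, ← div_div]
        rw [this, Real.log_div (div_ne_zero h0 hqne) hc.ne']
        ring
    have h1 : (fun x => p x * Real.log (p x / q θ' x))
        = fun x => p x * Real.log (p x / q θ x) - Real.log c * p x := funext hpt
    rw [hD θ', hD θ, h1, integral_sub (hlog_int θ) (hp_int.const_mul _),
      integral_const_mul, hZ]
    ring
  -- scaling formula for ∫ q
  have hIscale : ∀ θ θ' : Fin n → ℝ, ∀ c : ℝ, (∀ x', q θ' x' = c * q θ x') →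
      (∫ x, q θ' x) = c * ∫ x, q θ x := by
    intro θ θ' c hqq
    have : (fun x => q θ' x) = fun x => c * q θ x := funext hqq
    rw [this, integral_const_mul]
  rcases eq_or_lt_of_le hZ_nonneg with hZ0 | hZpos
  · -- degenerate case Z = 0 : both sides are false
    have hp0 : p =ᵐ[volume] 0 :=
      (integral_eq_zero_iff_of_nonneg hp_nonneg hp_int).mp (hZ ▸ hZ0.symm)
    have hintp : (∫ x, p x) = 0 := hZ ▸ hZ0.symm
    have hD0 : ∀ θ, D θ = 0 := by
      intro θ
      rw [hD θ]
      apply integral_eq_zero_of_ae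
      filter_upwards [hp0] with x hx
      simp [hx]
    apply iff_of_false
    · intro hmin
      obtain ⟨θ', hθ'⟩ := hscale θstar (1/2) (by norm_num)
      have h1 := hmin θ'
      rw [hDstar θ', hDstar θstar, hD0, hD0, hintp,
        hIscale θstar θ' (1/2) hθ'] at h1
      have := hI_pos θstar
      linarith
    · rintro ⟨hI, -⟩
      have := hI_pos θstar
      rw [hI, ← hZ0] at this
      exact lt_irrefl _ this
  · -- main case Z > 0
    constructor
    · intro hmin
      have hIZ : (∫ x, q θstar x) = Z := by
        by_contra hne
        set I := ∫ x, q θstar x with hI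
        have hIpos := hI_pos θstar
        have hc : (0:ℝ) < Z / I := div_pos hZpos hIpos
        obtain ⟨θ', hθ'⟩ := hscale θstar (Z / I) hc
        have h1 := hmin θ'
        rw [hDstar θ', hDstar θstar, hDscale θstar θ' (Z/I) hc hθ',
          hIscale θstar θ' (Z/I) hθ', ← hI] at h1
        have hcZ : (Z / I) * I = Z := by field_simp [show I ≠ 0 from hIpos.ne']
        -- strict log inequality: log c > 1 - 1/c since c ≠ 1
        have hcne1 : Z / I ≠ 1 := by
          intro h; apply hne; field_simp [show I ≠ 0 from hIpos.ne'] at h; linarith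
        have hlogne : Real.log (Z / I) ≠ 0 := by
          intro h
          rcases Real.log_eq_zero.mp h with h | h | h <;> [exact hc.ne' h; exact hcne1 h; linarith]
        have hstrict := Real.add_one_lt_exp (neg_ne_zero.mpr hlogne)
        rw [Real.exp_neg, Real.exp_log hc] at hstrict
        -- hstrict : -log(Z/I) + 1 < (Z/I)⁻¹ = I/Z
        have hinv : (Z / I)⁻¹ = I / Z := by field_simp
        rw [hinv] at hstrict
        -- from h1 : D - ∫p + I ≤ D - Z log c - ∫p + Z
        have h2 : I ≤ Z - Z * Real.log (Z / I) := by linarith [hcZ ▸ h1]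
        have h3 : Z * (-Real.log (Z / I) + 1) < Z * (I / Z) :=
          (mul_lt_mul_iff_right₀ hZpos).mpr hstrict
        have h4 : Z * (I / Z) = I := by field_simp
        rw [h4] at h3
        linarith
      refine ⟨hIZ, fun θ hθZ => ?_⟩
      have h1 := hmin θ
      rw [hDstar θ, hDstar θstar, hIZ, hθZ] at h1
      linarith
    · rintro ⟨hIZ, hconstr⟩ θ
      set J := ∫ x, q θ x with hJ
      have hJpos := hI_pos θ
      have hc : (0:ℝ) < Z / J := div_pos hZpos hJpos
      obtain ⟨θ', hθ'⟩ := hscale θ (Z / J) hc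
      have hI' : (∫ x, q θ' x) = Z := by
        rw [hIscale θ θ' (Z/J) hθ', ← hJ]; field_simp [show J ≠ 0 from hJpos.ne']
      have h1 := hconstr θ' hI'
      rw [hDscale θ θ' (Z/J) hc hθ'] at h1
      rw [hDstar θstar, hDstar θ, hIZ, ← hJ]
      -- need : D θstar - ∫p + Z ≤ D θ - ∫p + J, i.e. D θstar ≤ D θ + J - Z
      -- have : D θstar ≤ D θ - Z log(Z/J); and Z log(Z/J) ≥ Z - J
      have hle := Real.add_one_le_exp (-Real.log (Z / J))
      rw [Real.exp_neg, Real.exp_log hc] at hle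
      have hinv : (Z / J)⁻¹ = J / Z := by field_simp
      rw [hinv] at hle
      -- hle : -log(Z/J) + 1 ≤ J/Z  →  Z - Z log(Z/J) ≤ J
      have h3 : Z * (-Real.log (Z / J) + 1) ≤ Z * (J / Z) :=
        mul_le_mul_of_nonneg_left hle hZpos.le
      have h4 : Z * (J / Z) = J := by field_simp
      rw [h4] at h3
      linarith
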